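/- Let q be a prime with q ≡ 5 (mod 8) and δ an integer with all odd prime divisors p of δ satisfying (q/p) = -1, and gcd(q, δ) = 1. For the choice (y, z, w) = (1, 1, 1), the element μ = yi + zj + wk of the quaternion algebra D = (q, δ/ℚ) satisfies: μ has reduced trace 0, μ² = q + δ - qδ ∈ ℤ, and ℚ(√(q + δ - qδ)) is a quadratic field (i.e., q + δ - qδ is not a perfect square) in which no odd prime dividing δ ramifies, provided δ has an odd prime divisor. -/

import Mathlib

/-- For `(y,z,w) = (1,1,1)` the element `μ = i + j + k` of the quaternion algebra
`(q, δ / ℚ)` has reduced trace `0`, `μ² = q + δ - qδ`, `q + δ - qδ` is not a perfect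
square, and no odd prime dividing `δ` divides (hence ramifies in `ℚ(√·)` of)
`q + δ - qδ`. -/
theorem stmt_18 (q : ℕ) (hq : q.Prime) (h5 : q % 8 = 5) (δ : ℤ)
    (hcop : IsCoprime (q : ℤ) δ)
    (hres : ∀ p : ℕ, p.Prime → p ≠ 2 → (p : ℤ) ∣ δ → ¬ IsSquare ((q : ZMod p)))
    (hodd : ∃ p : ℕ, p.Prime ∧ p ≠ 2 ∧ (p : ℤ) ∣ δ) :
    ((⟨0, 1, 1, 1⟩ : QuaternionAlgebra ℚ (q : ℚ) 0 (δ : ℚ)) +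
        star (⟨0, 1, 1, 1⟩ : QuaternionAlgebra ℚ (q : ℚ) 0 (δ : ℚ)) = 0) ∧
    ((⟨0, 1, 1, 1⟩ : QuaternionAlgebra ℚ (q : ℚ) 0 (δ : ℚ)) *
        (⟨0, 1, 1, 1⟩ : QuaternionAlgebra ℚ (q : ℚ) 0 (δ : ℚ)) =
      algebraMap ℚ (QuaternionAlgebra ℚ (q : ℚ) 0 (δ : ℚ))
        ((q : ℚ) + (δ : ℚ) - (q : ℚ) * (δ : ℚ))) ∧
    ¬ IsSquare ((q : ℤ) + δ - (q : ℤ) * δ) ∧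
    ∀ p : ℕ, p.Prime → p ≠ 2 → (p : ℤ) ∣ δ → ¬ (p : ℤ) ∣ ((q : ℤ) + δ - (q : ℤ) * δ) :=  by
  have key : ∀ p : ℕ, p.Prime → p ≠ 2 → (p : ℤ) ∣ δ → ((δ : ZMod p) = 0 ∧ (q : ZMod p) ≠ 0) := by
    intro p hp h2 hd
    haveI := Fact.mk hp
    constructor
    · exact_mod_cast (ZMod.intCast_zmod_eq_zero_iff_dvd δ p).2 hd
    · intro h0
      exact hres p hp h2 hd ⟨0, by simp [h0]⟩
  refine ⟨?_, ?_, ?_, ?_⟩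
  · ext <;> simp
  · ext <;> simp <;> ring
  · rintro ⟨n, hn⟩
    obtain ⟨p, hp, h2, hd⟩ := hodd
    haveI := Fact.mk hp
    obtain ⟨hδ0, hq0⟩ := key p hp h2 hd
    apply hres p hp h2 hd
    refine ⟨(n : ZMod p), ?_⟩
    have := congrArg (fun x : ℤ => (x : ZMod p)) hn
    push_cast at this
    rw [hδ0] at this
    simpa using this
  · intro p hp h2 hd hdvd
    haveI := Fact.mk hp
    obtain ⟨hδ0, hq0⟩ := key p hp h2 hd
    have : ((((q : ℤ) + δ - (q : ℤ) * δ) : ℤ) : ZMod p) = 0 :=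
      (ZMod.intCast_zmod_eq_zero_iff_dvd _ p).2 hdvd
    push_cast at this
    rw [hδ0] at this
    simp at this
    exact hq0 this
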